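/- Let {G_{N,n} : N, n ∈ ℕ} be random functions from ℝ to ℝ that are nondecreasing in t, let {g_N} be deterministic real functions, and let g : ℝ → ℝ be continuous. Suppose that (a) for every N and every t ∈ ℝ, G_{N,n}(t) − g_N(t) → 0 in probability as n → ∞, and (b) for every t ∈ ℝ, g_N(t) → g(t) as N → ∞. Then there exists a nondecreasing sequence of natural numbers N_n with N_n → ∞ such that for every t ∈ ℝ, G_{N_n,n}(t) → g(t) in probability as n → ∞. -/

import Mathlib

open MeasureTheory ProbabilityTheory Filter Finset

noncomputable section

/-- The standard normal distribution function `Φ`. -/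
def stdNormCDF (t : ℝ) : ℝ := (ProbabilityTheory.gaussianReal 0 1 (Set.Iic t)).toReal

/-- Sample mean of the first `n` entries of a data sequence (data indexed from 0). -/
def sampleMean (n : ℕ) (x : ℕ → ℝ) : ℝ := (∑ i ∈ Finset.range n, x i) / n

/-- Sample first-order autocorrelation `ρ̂_n` of the first `n` entries. -/
def rhoHat (n : ℕ) (x : ℕ → ℝ) : ℝ :=
  (∑ i ∈ Finset.range (n - 1), (x i - sampleMean n x) * (x (i + 1) - sampleMean n x)) /
    ∑ i ∈ Finset.range n, (x i - sampleMean n x) ^ 2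

/-- Sample lag-`k` autocorrelation. -/
def rhoHatLag (n k : ℕ) (x : ℕ → ℝ) : ℝ :=
  (∑ i ∈ Finset.range (n - k), (x i - sampleMean n x) * (x (i + k) - sampleMean n x)) /
    ∑ i ∈ Finset.range n, (x i - sampleMean n x) ^ 2

/-- The data vector permuted by `π`: entry `i < n` is `x (π i)`. -/
def permute (n : ℕ) (π : Equiv.Perm (Fin n)) (x : ℕ → ℝ) : ℕ → ℝ :=
  fun i => if h : i < n then x (π ⟨i, h⟩) else 0

/-- The permutation distribution `R̂_n(t)` of a statistic `T` at data `x`. -/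
def permDist (n : ℕ) (T : (ℕ → ℝ) → ℝ) (x : ℕ → ℝ) (t : ℝ) : ℝ :=
  (∑ π : Equiv.Perm (Fin n), if T (permute n π x) ≤ t then (1 : ℝ) else 0) /
    (Nat.factorial n : ℝ)

/-- The statistic `√n ρ̂_n`. -/
def statRho (n : ℕ) : (ℕ → ℝ) → ℝ := fun x => Real.sqrt n * rhoHat n x

/-- Convergence in probability to a constant. -/
def TendstoInProbability {Ω : Type*} [MeasurableSpace Ω] (P : Measure Ω)
    (Z : ℕ → Ω → ℝ) (c : ℝ) : Prop :=
  ∀ ε : ℝ, 0 < ε →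
    Filter.Tendsto (fun n => P {ω | ε ≤ |Z n ω - c|}) Filter.atTop (nhds 0)

/-- Convergence in distribution: convergence of CDFs at continuity points of the limit CDF. -/
def TendstoInDistribution {Ω : Type*} [MeasurableSpace Ω] (P : Measure Ω)
    (W : ℕ → Ω → ℝ) (ν : Measure ℝ) : Prop :=
  ∀ t : ℝ, ContinuousAt (fun s => (ν (Set.Iic s)).toReal) t →
    Filter.Tendsto (fun n => (P {ω | W n ω ≤ t}).toReal) Filter.atTop
      (nhds ((ν (Set.Iic t)).toReal))

/-- Strict stationarity of a one-sided sequence. -/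
def StrictlyStationary {Ω : Type*} [MeasurableSpace Ω] (P : Measure Ω) (X : ℕ → Ω → ℝ) : Prop :=
  ∀ k : ℕ,
    Measure.map (fun ω => fun i : ℕ => X (i + k) ω) P =
      Measure.map (fun ω => fun i : ℕ => X i ω) P

/-- `m`-dependence: the first `k` variables are independent of `(X_{k+m}, X_{k+m+1}, …)`
(0-based indexing). -/
def MDependent {Ω : Type*} [MeasurableSpace Ω] (P : Measure Ω) (X : ℕ → Ω → ℝ) (m : ℕ) : Prop :=
  ∀ k : ℕ,
    IndepFun (fun ω => fun i : Fin k => X i ω) (fun ω => fun i : ℕ => X (k + m + i) ω) P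

/-- α-mixing coefficients of a one-sided sequence (0-based indexing): past is
`σ(X_0, …, X_k)`, future is `σ(X_j : j ≥ k + n)`. -/
def alphaMix {Ω : Type*} [MeasurableSpace Ω] (P : Measure Ω) (X : ℕ → Ω → ℝ) (n : ℕ) : ℝ :=
  sSup {x : ℝ | ∃ (k : ℕ) (A B : Set Ω),
    MeasurableSet[MeasurableSpace.comap (fun ω => fun i : Fin (k + 1) => X i ω) inferInstance] A ∧
    MeasurableSet[MeasurableSpace.comap (fun ω => fun i : ℕ => X (k + n + i) ω) inferInstance] B ∧
    x = |(P (A ∩ B)).toReal - (P A).toReal * (P B).toReal|}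

/-- Covariance of two real random variables. -/
def covar {Ω : Type*} [MeasurableSpace Ω] (P : Measure Ω) (f g : Ω → ℝ) : ℝ :=
  ∫ ω, (f ω - ∫ x, f x ∂P) * (g ω - ∫ x, g x ∂P) ∂P

/-- The centered sequence `X̃_i = X_i − E[X_0]`. -/
def centered {Ω : Type*} [MeasurableSpace Ω] (P : Measure Ω) (X : ℕ → Ω → ℝ) (i : ℕ) : Ω → ℝ :=
  fun ω => X i ω - ∫ x, X 0 x ∂P

/-- `ρ_1 = Cov(X_1, X_2)/σ²` (0-based: `Cov(X_0, X_1)/Var(X_0)`). -/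
def rho1 {Ω : Type*} [MeasurableSpace Ω] (P : Measure Ω) (X : ℕ → Ω → ℝ) : ℝ :=
  covar P (X 0) (X 1) / variance (X 0) P

/-- `τ_1² = Var(X̃_1X̃_2) + 2∑_{k≥2} Cov(X̃_1X̃_2, X̃_kX̃_{k+1})`. -/
def tau1sq {Ω : Type*} [MeasurableSpace Ω] (P : Measure Ω) (X : ℕ → Ω → ℝ) : ℝ :=
  variance (fun ω => centered P X 0 ω * centered P X 1 ω) P +
    2 * ∑' k : ℕ,
      covar P (fun ω => centered P X 0 ω * centered P X 1 ω)
        (fun ω => centered P X (k + 1) ω * centered P X (k + 2) ω)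

/-- `κ² = Var(X̃_1²) + 2∑_{k≥2} Cov(X̃_1², X̃_k²)`. -/
def kappa2 {Ω : Type*} [MeasurableSpace Ω] (P : Measure Ω) (X : ℕ → Ω → ℝ) : ℝ :=
  variance (fun ω => centered P X 0 ω ^ 2) P +
    2 * ∑' k : ℕ,
      covar P (fun ω => centered P X 0 ω ^ 2) (fun ω => centered P X (k + 1) ω ^ 2)

/-- `ν_1 = Cov(X̃_1X̃_2, X̃_1²) + ∑_{k≥2}[Cov(X̃_1², X̃_kX̃_{k+1}) + Cov(X̃_1X̃_2, X̃_k²)]`. -/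
def nu1 {Ω : Type*} [MeasurableSpace Ω] (P : Measure Ω) (X : ℕ → Ω → ℝ) : ℝ :=
  covar P (fun ω => centered P X 0 ω * centered P X 1 ω) (fun ω => centered P X 0 ω ^ 2) +
    ∑' k : ℕ,
      (covar P (fun ω => centered P X 0 ω ^ 2)
          (fun ω => centered P X (k + 1) ω * centered P X (k + 2) ω) +
        covar P (fun ω => centered P X 0 ω * centered P X 1 ω)
          (fun ω => centered P X (k + 1) ω ^ 2))

/-- `γ_1² = (τ_1² − 2ρ_1ν_1 + ρ_1²κ²)/σ⁴`. -/
def gamma1sq {Ω : Type*} [MeasurableSpace Ω] (P : Measure Ω) (X : ℕ → Ω → ℝ) : ℝ :=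
  (tau1sq P X - 2 * rho1 P X * nu1 P X + rho1 P X ^ 2 * kappa2 P X) / variance (X 0) P ^ 2

instance instMSPerm (n : ℕ) : MeasurableSpace (Equiv.Perm (Fin n)) := ⊤

/-- Uniform distribution on the symmetric group `S_n`. -/
def permMeasure (n : ℕ) : Measure (Equiv.Perm (Fin n)) :=
  (PMF.uniformOfFintype (Equiv.Perm (Fin n))).toMeasure

/-- `∑_{i=1}^{n−1} x_i x_{i+1}` (0-based). -/
def lagSum (n : ℕ) (x : ℕ → ℝ) : ℝ := ∑ i ∈ Finset.range (n - 1), x i * x (i + 1)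

/-- `Y_i = (x_i − x̄_n)(x_{i+1} − x̄_n)`. -/
def Yh (n : ℕ) (x : ℕ → ℝ) (i : ℕ) : ℝ :=
  (x i - sampleMean n x) * (x (i + 1) - sampleMean n x)

/-- `W_i = (x_i − x̄_n)²`. -/
def Wh (n : ℕ) (x : ℕ → ℝ) (i : ℕ) : ℝ := (x i - sampleMean n x) ^ 2

/-- `Ȳ_n = (1/(n−1)) ∑_{i=1}^{n−1} Y_i`. -/
def Ybar (n : ℕ) (x : ℕ → ℝ) : ℝ := (∑ i ∈ Finset.range (n - 1), Yh n x i) / ((n : ℝ) - 1)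

/-- `W̄_n = (1/n) ∑_{i=1}^{n} W_i`. -/
def Wbar (n : ℕ) (x : ℕ → ℝ) : ℝ := (∑ i ∈ Finset.range n, Wh n x i) / n

/-- The estimator `T̂_n²` with bandwidth `b`. -/
def That2 (n b : ℕ) (x : ℕ → ℝ) : ℝ :=
  (∑ i ∈ Finset.range (n - 1), (Yh n x i - Ybar n x) ^ 2) / n +
    (2 / n) * ∑ j ∈ Finset.Icc 1 b, ∑ i ∈ Finset.range (n - j - 1),
      (Yh n x i - Ybar n x) * (Yh n x (i + j) - Ybar n x)

/-- The estimator `K̂_n²` with bandwidth `b`. -/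
def Khat2 (n b : ℕ) (x : ℕ → ℝ) : ℝ :=
  (∑ i ∈ Finset.range n, (Wh n x i - Wbar n x) ^ 2) / n +
    (2 / n) * ∑ j ∈ Finset.Icc 1 b, ∑ i ∈ Finset.range (n - j),
      (Wh n x i - Wbar n x) * (Wh n x (i + j) - Wbar n x)

/-- The estimator `ν̂_n` with bandwidth `b`. -/
def nuHat (n b : ℕ) (x : ℕ → ℝ) : ℝ :=
  (∑ i ∈ Finset.range (n - 1), (Yh n x i - Ybar n x) * (Wh n x i - Wbar n x)) / n +
    (1 / n) * ∑ j ∈ Finset.Icc 1 b, ∑ i ∈ Finset.range (n - j - 1),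
      ((Yh n x i - Ybar n x) * (Wh n x (i + j) - Wbar n x) +
        (Wh n x i - Wbar n x) * (Yh n x (i + j) - Ybar n x))

/-- `σ̂_n² = (1/n) ∑_{i=1}^n (x_i − x̄_n)²`. -/
def sigmaHat2 (n : ℕ) (x : ℕ → ℝ) : ℝ :=
  (∑ i ∈ Finset.range n, (x i - sampleMean n x) ^ 2) / n

/-- The studentizing estimator `γ̂_n²`. -/
def gammaHat2 (n b : ℕ) (x : ℕ → ℝ) : ℝ :=
  (That2 n b x - 2 * rhoHat n x * nuHat n b x + rhoHat n x ^ 2 * Khat2 n b x) /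
    sigmaHat2 n x ^ 2

/-- The estimator `τ̂_n²` with bandwidth `b`. -/
def tauHat2 (n b : ℕ) (x : ℕ → ℝ) : ℝ :=
  (∑ i ∈ Finset.range n, (x i - sampleMean n x) ^ 2) / n +
    (2 / n) * ∑ j ∈ Finset.Icc 1 b, ∑ i ∈ Finset.range (n - j),
      (x i - sampleMean n x) * (x (i + j) - sampleMean n x)


/-- truncation diagonalization lemma for doubly-indexed random
nondecreasing functions. -/
theorem stmt13 {Ω : Type*} [MeasurableSpace Ω] (P : Measure Ω) [IsProbabilityMeasure P]
    (G : ℕ → ℕ → Ω → ℝ → ℝ) (g : ℕ → ℝ → ℝ) (glim : ℝ → ℝ)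
    (hmono : ∀ N n ω, Monotone (G N n ω))
    (hcont : Continuous glim)
    (hconv : ∀ N, ∀ t : ℝ, TendstoInProbability P (fun n ω => G N n ω t - g N t) 0)
    (hglim : ∀ t : ℝ, Filter.Tendsto (fun N => g N t) Filter.atTop (nhds (glim t))) :
    ∃ Ns : ℕ → ℕ, Monotone Ns ∧ Filter.Tendsto Ns Filter.atTop Filter.atTop ∧
      ∀ t : ℝ, TendstoInProbability P (fun n ω => G (Ns n) n ω t) (glim t) := by
  classical
  set q : ℕ → ℚ := fun k => (Denumerable.eqv ℚ).symm k with hqdef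
  -- Step 1: for each N, eventually in n the error at the first N+1 rationals is small
  have key : ∀ N : ℕ, ∃ M : ℕ, ∀ n, M ≤ n → ∀ k, k ≤ N →
      P {ω | (1:ℝ)/(N+1) ≤ |G N n ω (q k) - g N (q k)|} ≤ (1:ENNReal)/(N+1) := by
    intro N
    have h1 : ∀ k : Fin (N+1), ∀ᶠ n in atTop,
        P {ω | (1:ℝ)/(N+1) ≤ |G N n ω (q k) - g N (q k)|} ≤ (1:ENNReal)/(N+1) := by
      intro k
      have hpos : (0:ℝ) < 1/(N+1) := by positivity
      have h := hconv N (q k) (1/(N+1)) hpos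
      simp only [sub_zero] at h
      have hlt : (0:ENNReal) < 1/(N+1) :=
        ENNReal.div_pos one_ne_zero (by simp)
      exact (h.eventually_lt_const hlt).mono fun n hn => hn.le
    have h2 : ∀ᶠ n in atTop, ∀ k : Fin (N+1),
        P {ω | (1:ℝ)/(N+1) ≤ |G N n ω (q k) - g N (q k)|} ≤ (1:ENNReal)/(N+1) :=
      eventually_all.2 h1
    rw [eventually_atTop] at h2
    obtain ⟨M, hM⟩ := h2
    exact ⟨M, fun n hn k hk => hM n hn ⟨k, Nat.lt_succ_of_le hk⟩⟩
  choose M hM using key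
  -- Step 2: a strictly monotone majorant of M
  let M' : ℕ → ℕ := fun N => Nat.rec (M 0) (fun j ih => max (M (j+1)) (ih+1)) N
  have hM'mono : StrictMono M' :=
    strictMono_nat_of_lt_succ fun n =>
      lt_of_lt_of_le (Nat.lt_succ_self _) (le_max_right _ _)
  have hMM' : ∀ N, M N ≤ M' N := by
    intro N
    cases N with
    | zero => exact le_rfl
    | succ j => exact le_max_left _ _
  -- Step 3: the diagonal sequence
  let S : ℕ → Set ℕ := fun n => {N | M' N ≤ n}
  have hSbdd : ∀ n, BddAbove (S n) :=
    fun n => ⟨n, fun N hN => le_trans (hM'mono.le_apply) hN⟩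
  set Ns : ℕ → ℕ := fun n => sSup (S n) with hNsdef
  have hNsmem : ∀ n, M' 0 ≤ n → M' (Ns n) ≤ n := by
    intro n hn
    have h0 : (0:ℕ) ∈ S n := hn
    exact Nat.sSup_mem ⟨0, h0⟩ (hSbdd n)
  have hNsmono : Monotone Ns := by
    intro a b hab
    by_cases ha : (S a).Nonempty
    · exact csSup_le_csSup (hSbdd b) ha (fun N hN => le_trans hN hab)
    · have : S a = ∅ := Set.not_nonempty_iff_eq_empty.mp ha
      simp only [hNsdef, this, csSup_empty]
      exact Nat.zero_le _
  have hNsTop : Tendsto Ns atTop atTop := by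
    rw [tendsto_atTop]
    intro N
    rw [eventually_atTop]
    exact ⟨M' N, fun n hn => le_csSup (hSbdd n) hn⟩
  -- Step 4: convergence in probability at each rational point
  have hinvzero : Tendsto (fun n => (1:ENNReal)/(Ns n + 1)) atTop (nhds 0) := by
    have h1 : Tendsto (fun m : ℕ => (1:ENNReal)/((m:ENNReal) + 1)) atTop (nhds 0) := by
      have h2 := ENNReal.tendsto_inv_nat_nhds_zero.comp (tendsto_add_atTop_nat 1)
      convert h2 using 2 with m
      simp [one_div]
    exact h1.comp hNsTop
  have hrat : ∀ r : ℚ, TendstoInProbability P (fun n ω => G (Ns n) n ω r) (glim r) := by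
    intro r ε hε
    set k : ℕ := Denumerable.eqv ℚ r with hkdef
    have hqk : q k = r := (Denumerable.eqv ℚ).symm_apply_apply r
    obtain ⟨K, hKgt⟩ := exists_nat_gt (2/ε)
    have hK : (1:ℝ)/(K+1) ≤ ε/2 := by
      have h1 : (0:ℝ) < 2/ε := by positivity
      have h2 : (2:ℝ)/ε ≤ K + 1 := by linarith
      have := one_div_le_one_div_of_le h1 h2
      rwa [one_div_div] at this
    have hbound : ∀ᶠ n in atTop,
        P {ω | ε ≤ |G (Ns n) n ω r - glim r|} ≤ (1:ENNReal)/(Ns n + 1) := by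
      have e1 : ∀ᶠ n in atTop, M' 0 ≤ n := eventually_atTop.2 ⟨M' 0, fun n h => h⟩
      have e2 : ∀ᶠ n in atTop, max k K ≤ Ns n := hNsTop.eventually_ge_atTop _
      have e3 : ∀ᶠ n in atTop, |g (Ns n) r - glim r| ≤ ε/2 := by
        have h4 := ((hglim r).comp hNsTop).eventually
          (Metric.closedBall_mem_nhds (glim (r:ℝ)) (half_pos hε))
        filter_upwards [h4] with n hn
        simpa [Real.dist_eq] using hn
      filter_upwards [e1, e2, e3] with n h1 h2 h3
      have hk2 : k ≤ Ns n := le_trans (le_max_left _ _) h2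
      have hKN : K ≤ Ns n := le_trans (le_max_right _ _) h2
      have hmain := hM (Ns n) n (le_trans (hMM' _) (hNsmem n h1)) k hk2
      rw [hqk] at hmain
      refine le_trans (measure_mono ?_) hmain
      intro ω hω
      simp only [Set.mem_setOf_eq] at hω ⊢
      have htri : |G (Ns n) n ω r - glim r| ≤
          |G (Ns n) n ω r - g (Ns n) r| + |g (Ns n) r - glim r| :=
        abs_sub_le _ _ _
      have h5 : ε/2 ≤ |G (Ns n) n ω r - g (Ns n) r| := by linarith
      have h6 : (1:ℝ)/(Ns n + 1) ≤ 1/(K+1) := by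
        apply one_div_le_one_div_of_le (by positivity)
        have : (K:ℝ) ≤ Ns n := by exact_mod_cast hKN
        linarith
      linarith
    refine tendsto_of_tendsto_of_tendsto_of_le_of_le' tendsto_const_nhds hinvzero
      (Filter.Eventually.of_forall fun n => zero_le) hbound
  -- Step 5: arbitrary real points via monotonicity and continuity
  refine ⟨Ns, hNsmono, hNsTop, ?_⟩
  intro t ε hε
  obtain ⟨δ, hδpos, hδ⟩ := Metric.continuousAt_iff.mp (hcont.continuousAt (x := t)) (ε/3)
    (by linarith)
  obtain ⟨r1, hr1a, hr1b⟩ := exists_rat_btwn (show t - δ < t by linarith)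
  obtain ⟨r2, hr2a, hr2b⟩ := exists_rat_btwn (show t < t + δ by linarith)
  have hd1 : |glim r1 - glim t| < ε/3 := by
    have : dist (r1:ℝ) t < δ := by
      rw [Real.dist_eq, abs_lt]; constructor <;> linarith
    have := hδ this
    rwa [Real.dist_eq] at this
  have hd2 : |glim r2 - glim t| < ε/3 := by
    have : dist (r2:ℝ) t < δ := by
      rw [Real.dist_eq, abs_lt]; constructor <;> linarith
    have := hδ this
    rwa [Real.dist_eq] at this
  have hsub : ∀ n, {ω | ε ≤ |G (Ns n) n ω t - glim t|} ⊆
      {ω | ε/3 ≤ |G (Ns n) n ω r1 - glim ↑r1|} ∪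
      {ω | ε/3 ≤ |G (Ns n) n ω r2 - glim ↑r2|} := by
    intro n ω hω
    simp only [Set.mem_setOf_eq, Set.mem_union] at hω ⊢
    have hm1 : G (Ns n) n ω r1 ≤ G (Ns n) n ω t := hmono _ _ _ (le_of_lt hr1b)
    have hm2 : G (Ns n) n ω t ≤ G (Ns n) n ω r2 := hmono _ _ _ (le_of_lt hr2a)
    have hb1 := abs_lt.mp hd1
    have hb2 := abs_lt.mp hd2
    rcases le_abs.mp hω with h | h
    · right
      rw [le_abs]
      left
      linarith
    · left
      rw [le_abs]
      right
      linarith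
  have h1 := hrat r1 (ε/3) (by linarith)
  have h2 := hrat r2 (ε/3) (by linarith)
  have hsum : Tendsto (fun n => P {ω | ε/3 ≤ |G (Ns n) n ω r1 - glim ↑r1|} +
      P {ω | ε/3 ≤ |G (Ns n) n ω r2 - glim ↑r2|}) atTop (nhds 0) := by
    simpa using h1.add h2
  refine tendsto_of_tendsto_of_tendsto_of_le_of_le tendsto_const_nhds hsum
    (fun n => zero_le)
    (fun n => le_trans (measure_mono (hsub n)) (measure_union_le _ _))

end
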